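/- Let F be a field, d, n ≥ 1, and let S ⊆ F be a finite set with |S| > d. Set N := d(d+1)² + 1 and identify A_d with F^N as an F-vector space (the d(d+1)² entries of the A'_d component together with the scalar coordinate). Let f be a nonzero element of the unitization of F_{Ā,C̄}[X] whose F_{Ā,C̄}[X]-component has degree ≤ d. Then the number of tuples (b_1,…,b_n) with every b_i ∈ A_d having all N coordinates in S for which the evaluation f(b_1,…,b_n) = 0 is at most d · |S|^{nN − 1}; equivalently, if each of the nN coordinates is chosen uniformly and independently from S, then Pr[f(b_1,…,b_n) = 0] ≤ d/|S|. -/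

import Mathlib

noncomputable section

open scoped BigOperators

namespace NAPIT

/-- The list of (leaf label, leaf level) pairs of a nonassociative monomial (element of the
free magma), in left-to-right order, where the root of the monomial is at level `s`. -/
def leafData {n : ℕ} : FreeMagma (Fin n) → ℕ → List (Fin n × ℕ)
  | FreeMagma.of i, s => [(i, s)]
  | FreeMagma.mul x y, s => leafData x (s + 1) ++ leafData y (s + 1)

/-- The degree (number of leaves) of a nonassociative monomial. -/
def degM {n : ℕ} : FreeMagma (Fin n) → ℕ
  | FreeMagma.of _ => 1
  | FreeMagma.mul x y => degM x + degM y

/-- The depth of a nonassociative monomial (root at level 1; the depth is the maximal level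
of a leaf). -/
def depthM {n : ℕ} : FreeMagma (Fin n) → ℕ
  | FreeMagma.of _ => 1
  | FreeMagma.mul x y => max (depthM x) (depthM y) + 1

/-- Evaluation of a nonassociative monomial at `b : Fin n → A`, using `mul` as the product on
`A`; this is the unique magma homomorphism `FreeMagma (Fin n) → (A, mul)` with `x_i ↦ b i`. -/
def evalWith {n : ℕ} {A : Type*} (mul : A → A → A) (b : Fin n → A) : FreeMagma (Fin n) → A
  | FreeMagma.of i => b i
  | FreeMagma.mul x y => mul (evalWith mul b x) (evalWith mul b y)

/-- The multiset of all variants `m_ε` of a monomial `m`, where `ε` ranges over all choices of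
a Boolean for each internal node of `m`, and `m_ε` is obtained from `m` by swapping the two
children at exactly those internal nodes where `ε` is true (counted with multiplicity). -/
def variants {n : ℕ} : FreeMagma (Fin n) → Multiset (FreeMagma (Fin n))
  | FreeMagma.of i => {FreeMagma.of i}
  | FreeMagma.mul x y =>
      (variants x).bind fun x' => (variants y).bind fun y' =>
        {FreeMagma.mul x' y', FreeMagma.mul y' x'}

/-- The underlying module of the algebra `A'_d(R)`: arrays `x[i,j,k]` with
`i, j ∈ Fin (d+1)`, `k ∈ Fin d` (zero-based; the paper's indices are shifted by one). -/
def Arr (d : ℕ) (R : Type*) : Type _ := Fin (d + 1) → Fin (d + 1) → Fin d → R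

namespace Arr

variable {d : ℕ} {R : Type*}

instance instAddCommGroup [AddCommGroup R] : AddCommGroup (Arr d R) :=
  inferInstanceAs (AddCommGroup (Fin (d + 1) → Fin (d + 1) → Fin d → R))

instance instModule {S : Type*} [Semiring S] [AddCommGroup R] [Module S R] :
    Module S (Arr d R) :=
  inferInstanceAs (Module S (Fin (d + 1) → Fin (d + 1) → Fin d → R))

/-- The bilinear product `∘` of `A'_d(R)`:
`(x ∘ y)[i,j,k] = ∑_{l} x[i,l,k+1] * y[l,j,k+1]` if `k+1` is a legal third index, else `0`. -/
def aprod [CommRing R] (x y : Arr d R) : Arr d R := fun i j k =>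
  if h : (k : ℕ) + 1 < d then
    ∑ l : Fin (d + 1), x i l ⟨(k : ℕ) + 1, h⟩ * y l j ⟨(k : ℕ) + 1, h⟩
  else 0

instance instMul [CommRing R] : Mul (Arr d R) := ⟨aprod⟩

end Arr

/-- The algebra `C'_d(R)`: same underlying module as `A'_d(R)`, with the anticommutator
product `a ⊙ b = a ∘ b + b ∘ a`. -/
def CArr (d : ℕ) (R : Type*) : Type _ := Arr d R

namespace CArr

variable {d : ℕ} {R : Type*}

/-- The identity map `A'_d(R) → C'_d(R)` of underlying modules. -/
def ofArr (x : Arr d R) : CArr d R := x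

/-- The identity map `C'_d(R) → A'_d(R)` of underlying modules. -/
def toArr (x : CArr d R) : Arr d R := x

instance instAddCommGroup [AddCommGroup R] : AddCommGroup (CArr d R) :=
  inferInstanceAs (AddCommGroup (Arr d R))

instance instModule {S : Type*} [Semiring S] [AddCommGroup R] [Module S R] :
    Module S (CArr d R) :=
  inferInstanceAs (Module S (Arr d R))

instance instMul [CommRing R] : Mul (CArr d R) :=
  ⟨fun a b => ofArr (toArr a * toArr b + toArr b * toArr a)⟩

end CArr

/-- The element `Z_i ∈ A'_d(R)`, `R = MvPolynomial (Fin n × Fin d × Fin d) F`, whose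
`(j, j+1, k)` entry is the indeterminate `z_{i,j,k}` and whose other entries vanish. -/
def Z (F : Type*) [CommRing F] (n d : ℕ) (i : Fin n) :
    Arr d (MvPolynomial (Fin n × Fin d × Fin d) F) := fun j j' k =>
  if h : (j : ℕ) < d ∧ (j' : ℕ) = (j : ℕ) + 1 then
    MvPolynomial.X (i, ⟨(j : ℕ), h.1⟩, k)
  else 0

/-- The element `Z_i` regarded as an element of `C'_d(R)`. -/
def ZC (F : Type*) [CommRing F] (n d : ℕ) (i : Fin n) :
    CArr d (MvPolynomial (Fin n × Fin d × Fin d) F) := CArr.ofArr (Z F n d i)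

/-- The monomial `∏_{t=1}^{d'} z_{σ_m(t), (t-1) + k1, (l^m_t - 1) + k2}` associated to a
nonassociative monomial `m` of degree `d'` and offsets `k1, k2` (all indices zero-based; the
paper's 1-based offsets are `k1 + 1`, `k2 + 1`).  Indices which would fall out of range are
discarded (this never happens in the intended range of parameters). -/
def monProd (F : Type*) [CommRing F] {n : ℕ} (d : ℕ) (k1 k2 : ℕ) (m : FreeMagma (Fin n)) :
    MvPolynomial (Fin n × Fin d × Fin d) F :=
  (((leafData m 1).zipIdx.map Prod.swap).map fun p =>
    if h : p.1 + k1 < d ∧ p.2.2 - 1 + k2 < d then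
      MvPolynomial.X (p.2.1, ⟨p.1 + k1, h.1⟩, ⟨p.2.2 - 1 + k2, h.2⟩)
    else 0).prod

/-- `ψ(m) = ∑_ε ∏_{t=1}^{d'} z_{σ_{m_ε}(t), t, l^{m_ε}_t}` (1-based), the sum running over all
choices `ε` of a Boolean for each internal node of `m`. -/
def psi (F : Type*) [CommRing F] {n : ℕ} (d : ℕ) (m : FreeMagma (Fin n)) :
    MvPolynomial (Fin n × Fin d × Fin d) F :=
  ((variants m).map fun m' => monProd F d 0 0 m').sum

/-- The coefficient function of an element of the free nonunital nonassociative algebra. -/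
def coeffOf {F : Type*} [Semiring F] {n : ℕ}
    (f : FreeNonUnitalNonAssocAlgebra F (Fin n)) : FreeMagma (Fin n) →₀ F := f.coeff

/-- Evaluation of an element of the free nonunital nonassociative algebra on `x_1, …, x_n` at
the tuple `b`, with `mul` as the product of the target: the linear extension of
`m ↦ evalWith mul b m`, i.e. the unique nonunital `F`-algebra homomorphism sending
`x_i ↦ b i` into `(A, mul)`. -/
def evalNAWith {F : Type*} [Semiring F] {n : ℕ} {A : Type*}
    [AddCommMonoid A] [Module F A] (mul : A → A → A) (b : Fin n → A)
    (f : FreeNonUnitalNonAssocAlgebra F (Fin n)) : A :=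
  Finsupp.sum (coeffOf f) fun m c => c • evalWith mul b m

/-- Evaluation of an element of the free nonunital nonassociative algebra at a tuple `b` of
elements of a (not necessarily unital/associative) algebra `A`: the unique nonunital
`F`-algebra homomorphism sending `x_i ↦ b i`. -/
def evalNA {F : Type*} [Semiring F] {n : ℕ} {A : Type*}
    [AddCommMonoid A] [Mul A] [Module F A] (b : Fin n → A)
    (f : FreeNonUnitalNonAssocAlgebra F (Fin n)) : A :=
  evalNAWith (· * ·) b f

/-- Evaluation of an element of the unitization of the free nonunital nonassociative algebra
at a tuple `b` of elements of the unitization of `A`: the unique unital `F`-algebra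
homomorphism sending `x_i ↦ b i` (and the adjoined unit to the unit). -/
def evalUnit {F : Type*} [CommSemiring F] {n : ℕ} {A : Type*}
    [AddCommMonoid A] [Mul A] [Module F A] (b : Fin n → Unitization F A)
    (f : Unitization F (FreeNonUnitalNonAssocAlgebra F (Fin n))) : Unitization F A :=
  Unitization.inl f.fst + evalNA b f.snd

/-- The commutativity congruence on the free magma: the smallest equivalence relation with
`m₁ * m₂ ≈ m₂ * m₁` and compatible with the product. -/
inductive CommEq {n : ℕ} : FreeMagma (Fin n) → FreeMagma (Fin n) → Prop
  | refl (m : FreeMagma (Fin n)) : CommEq m m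
  | symm {a b : FreeMagma (Fin n)} : CommEq a b → CommEq b a
  | trans {a b c : FreeMagma (Fin n)} : CommEq a b → CommEq b c → CommEq a c
  | comm (a b : FreeMagma (Fin n)) : CommEq (a * b) (b * a)
  | mul_congr {a a' b b' : FreeMagma (Fin n)} :
      CommEq a a' → CommEq b b' → CommEq (a * b) (a' * b')

/-- The basis monomial `m` of the free nonunital nonassociative algebra. -/
def single1 (F : Type*) [Semiring F] {n : ℕ} (m : FreeMagma (Fin n)) :
    FreeNonUnitalNonAssocAlgebra F (Fin n) :=
  MonoidAlgebra.ofCoeff (Finsupp.single m 1 : FreeMagma (Fin n) →₀ F)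

/-- `I_comm`: the `F`-linear span of `{m − m' : m ≈ m'}` inside the free nonunital
nonassociative algebra. -/
def Icomm (F : Type*) [Field F] (n : ℕ) :
    Submodule F (FreeNonUnitalNonAssocAlgebra F (Fin n)) :=
  Submodule.span F
    {x | ∃ m m' : FreeMagma (Fin n), CommEq m m' ∧ x = single1 F m - single1 F m'}


variable {n : ℕ}

@[simp] lemma degM_of (i : Fin n) : degM (FreeMagma.of i) = 1 := rfl
@[simp] lemma degM_mul (x y : FreeMagma (Fin n)) : degM (x * y) = degM x + degM y := rfl
@[simp] lemma depthM_of (i : Fin n) : depthM (FreeMagma.of i) = 1 := rfl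
@[simp] lemma depthM_mul (x y : FreeMagma (Fin n)) :
    depthM (x * y) = max (depthM x) (depthM y) + 1 := rfl
@[simp] lemma leafData_of (i : Fin n) (s : ℕ) : leafData (FreeMagma.of i) s = [(i, s)] := rfl
@[simp] lemma leafData_mul (x y : FreeMagma (Fin n)) (s : ℕ) :
    leafData (x * y) s = leafData x (s + 1) ++ leafData y (s + 1) := rfl

lemma degM_pos (m : FreeMagma (Fin n)) : 1 ≤ degM m := by
  induction m using FreeMagma.recOnMul with
  | ih1 i => simp
  | ih2 x y ihx ihy => simp only [degM_mul]; omega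

lemma depthM_le_degM (m : FreeMagma (Fin n)) : depthM m ≤ degM m := by
  induction m using FreeMagma.recOnMul with
  | ih1 i => simp
  | ih2 x y ihx ihy =>
    have := degM_pos x; have := degM_pos y
    simp only [depthM_mul, degM_mul]; omega

lemma leafData_length (m : FreeMagma (Fin n)) (s : ℕ) : (leafData m s).length = degM m := by
  induction m using FreeMagma.recOnMul generalizing s with
  | ih1 i => simp
  | ih2 x y ihx ihy => simp [ihx, ihy]

lemma leafData_ne_nil (m : FreeMagma (Fin n)) (s : ℕ) : leafData m s ≠ [] := by
  intro h
  have := leafData_length m s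
  rw [h] at this
  have h1 := degM_pos m
  simp only [List.length_nil] at this
  omega

lemma leafData_level (m : FreeMagma (Fin n)) (s : ℕ) :
    ∀ p ∈ leafData m s, s ≤ p.2 ∧ p.2 < s + depthM m := by
  induction m using FreeMagma.recOnMul generalizing s with
  | ih1 i => intro p hp; simp at hp; subst hp; simp
  | ih2 x y ihx ihy =>
    intro p hp
    simp only [leafData_mul, List.mem_append] at hp
    rcases hp with hp | hp
    · have := ihx (s+1) p hp
      simp only [depthM_mul]; omega
    · have := ihy (s+1) p hp
      simp only [depthM_mul]; omega

lemma leafData_succ (m : FreeMagma (Fin n)) (s : ℕ) :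
    leafData m (s+1) = (leafData m s).map (fun p => (p.1, p.2 + 1)) := by
  induction m using FreeMagma.recOnMul generalizing s with
  | ih1 i => simp
  | ih2 x y ihx ihy => simp [ihx, ihy]

lemma leafData_append_inj (m : FreeMagma (Fin n)) :
    ∀ (m' : FreeMagma (Fin n)) (s : ℕ) (L L' : List (Fin n × ℕ)),
      leafData m s ++ L = leafData m' s ++ L' → m = m' ∧ L = L' := by
  induction m using FreeMagma.recOnMul with
  | ih1 i =>
    intro m' s L L' h
    cases m' with
    | of i' =>
      simp only [leafData_of, List.cons_append, List.nil_append, List.cons.injEq,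
        Prod.mk.injEq] at h
      exact ⟨by rw [h.1.1], h.2⟩
    | mul x y =>
      exfalso
      obtain ⟨p, tl, hpt⟩ := List.exists_cons_of_ne_nil (leafData_ne_nil x (s+1))
      have h' : leafData (FreeMagma.of i) s ++ L = leafData (x * y) s ++ L' := h
      simp only [leafData_of, leafData_mul, hpt, List.cons_append, List.nil_append,
        List.append_assoc, List.cons.injEq] at h'
      have hp : p ∈ leafData x (s+1) := by rw [hpt]; exact List.mem_cons_self
      have := (leafData_level x (s+1) p hp).1
      rw [← h'.1] at this
      simp at this
  | ih2 x y ihx ihy =>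
    intro m' s L L' h
    cases m' with
    | of i' =>
      exfalso
      obtain ⟨p, tl, hpt⟩ := List.exists_cons_of_ne_nil (leafData_ne_nil x (s+1))
      have h' : leafData (x * y) s ++ L = leafData (FreeMagma.of i') s ++ L' := h
      simp only [leafData_of, leafData_mul, hpt, List.cons_append, List.nil_append,
        List.append_assoc, List.cons.injEq] at h'
      have hp : p ∈ leafData x (s+1) := by rw [hpt]; exact List.mem_cons_self
      have := (leafData_level x (s+1) p hp).1
      rw [h'.1] at this
      simp at this
    | mul x' y' =>
      have h' : leafData (x * y) s ++ L = leafData (x' * y') s ++ L' := h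
      simp only [leafData_mul, List.append_assoc] at h'
      obtain ⟨hx, h2⟩ := ihx x' (s+1) _ _ h'
      obtain ⟨hy, h3⟩ := ihy y' (s+1) _ _ h2
      refine ⟨by rw [hx, hy]; rfl, h3⟩

lemma leafData_inj {m m' : FreeMagma (Fin n)} {s : ℕ} (h : leafData m s = leafData m' s) :
    m = m' := by
  have := leafData_append_inj m m' s [] [] (by simp [h])
  exact this.1

/-- Replacement for `List.enumFrom`. -/
def enumFrom' {α : Type*} (t0 : ℕ) (L : List α) : List (ℕ × α) := (L.zipIdx t0).map Prod.swap

@[simp] lemma enumFrom'_nil {α : Type*} (t0 : ℕ) : enumFrom' t0 ([] : List α) = [] := rfl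

lemma enumFrom'_cons {α : Type*} (t0 : ℕ) (a : α) (l : List α) :
    enumFrom' t0 (a :: l) = (t0, a) :: enumFrom' (t0 + 1) l := rfl

lemma enum_append' {α : Type*} (L L' : List α) :
    enumFrom' 0 (L ++ L') = enumFrom' 0 L ++ enumFrom' L.length L' := by
  simp [enumFrom', List.zipIdx_append]

@[simp] lemma enumFrom'_length {α : Type*} (t0 : ℕ) (L : List α) :
    (enumFrom' t0 L).length = L.length := by simp [enumFrom']

lemma mem_enumFrom' {α : Type*} {t0 : ℕ} {L : List α} {q : ℕ × α} (h : q ∈ enumFrom' t0 L) :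
    t0 ≤ q.1 ∧ q.1 < t0 + L.length ∧ q.2 ∈ L := by
  simp only [enumFrom', List.mem_map] at h
  obtain ⟨x, hx, rfl⟩ := h
  exact ⟨List.le_snd_of_mem_zipIdx hx, List.snd_lt_add_of_mem_zipIdx hx,
    List.fst_mem_of_mem_zipIdx hx⟩

lemma getElem_enumFrom' {α : Type*} (L : List α) (t0 t : ℕ) (h : t < (enumFrom' t0 L).length) :
    (enumFrom' t0 L)[t] = (t0 + t, L[t]'(by simpa using h)) := by
  simp [enumFrom']

section MonProd
variable {F : Type*} [CommRing F] {n d : ℕ}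

@[simp] lemma evalWith_of {A : Type*} (mul : A → A → A) (b : Fin n → A) (i : Fin n) :
    evalWith mul b (FreeMagma.of i) = b i := rfl

@[simp] lemma evalWith_mul' {A : Type*} (mul : A → A → A) (b : Fin n → A)
    (x y : FreeMagma (Fin n)) :
    evalWith mul b (x * y) = mul (evalWith mul b x) (evalWith mul b y) := rfl

/-- The single factor of `monProd`. -/
def mpFac (F : Type*) [CommRing F] {n : ℕ} (d k1 k2 : ℕ) (q : ℕ × (Fin n × ℕ)) :
    MvPolynomial (Fin n × Fin d × Fin d) F :=
  if h : q.1 + k1 < d ∧ q.2.2 - 1 + k2 < d then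
    MvPolynomial.X (q.2.1, ⟨q.1 + k1, h.1⟩, ⟨q.2.2 - 1 + k2, h.2⟩)
  else 0

lemma monProd_def (k1 k2 : ℕ) (m : FreeMagma (Fin n)) :
    monProd F d k1 k2 m = ((enumFrom' 0 (leafData m 1)).map (mpFac F d k1 k2)).prod := rfl

lemma enum_singleton {α : Type*} (a : α) : enumFrom' 0 [a] = [(0, a)] := rfl

lemma mpFac_congr {k1 k2 k1' k2' : ℕ} {q q' : ℕ × (Fin n × ℕ)}
    (h0 : q.2.1 = q'.2.1) (h1 : q.1 + k1 = q'.1 + k1') (h2 : q.2.2 - 1 + k2 = q'.2.2 - 1 + k2') :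
    mpFac F d k1 k2 q = mpFac F d k1' k2' q' := by
  simp only [mpFac, h0, h1, h2]

lemma prod_enumFrom_shift (L : List (Fin n × ℕ)) :
    ∀ (t0 t0' k1 k1' k2 : ℕ), t0' + k1' = t0 + k1 → (∀ p ∈ L, 1 ≤ p.2) →
      ((enumFrom' t0' (L.map (fun p => (p.1, p.2 + 1)))).map (mpFac F d k1' k2)).prod
        = ((enumFrom' t0 L).map (mpFac F d k1 (k2 + 1))).prod := by
  induction L with
  | nil => intro t0 t0' k1 k1' k2 h hl; simp
  | cons a l ih =>
    intro t0 t0' k1 k1' k2 h hl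
    have ha : 1 ≤ a.2 := hl a List.mem_cons_self
    simp only [List.map_cons, enumFrom'_cons, List.prod_cons]
    congr 1
    · exact mpFac_congr rfl (by omega) (by simp; omega)
    · exact ih (t0 + 1) (t0' + 1) k1 k1' k2 (by omega)
        (fun p hp => hl p (List.mem_cons_of_mem _ hp))

lemma monProd_mul (k1 k2 : ℕ) (x y : FreeMagma (Fin n)) :
    monProd F d k1 k2 (x * y)
      = monProd F d k1 (k2 + 1) x * monProd F d (k1 + degM x) (k2 + 1) y := by
  rw [monProd_def, monProd_def, monProd_def, leafData_mul, enum_append',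
    List.map_append, List.prod_append]
  congr 1
  · have := prod_enumFrom_shift (F := F) (d := d) (leafData x 1) 0 0 k1 k1 k2 rfl
      (fun p hp => (leafData_level x 1 p hp).1)
    rw [← leafData_succ] at this
    exact this
  · have := prod_enumFrom_shift (F := F) (d := d) (leafData y 1) 0
      ((leafData x (1 + 1)).length) (k1 + degM x) k1 k2
      (by rw [leafData_length]; omega) (fun p hp => (leafData_level y 1 p hp).1)
    rw [← leafData_succ] at this
    exact this

lemma monProd_deep (m : FreeMagma (Fin n)) (k1 k2 : ℕ) (h : d ≤ k2) :
    monProd F d k1 k2 m = 0 := by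
  induction m using FreeMagma.recOnMul generalizing k1 k2 with
  | ih1 i =>
    rw [monProd_def]
    simp only [leafData_of, enum_singleton, List.map_cons, List.map_nil,
      List.prod_cons, List.prod_nil, mul_one]
    simp only [mpFac]
    rw [dif_neg]
    simp only [not_and]
    intro _
    omega
  | ih2 x y ihx ihy =>
    rw [monProd_mul, ihx k1 (k2 + 1) (by omega), zero_mul]

lemma monProd_wide (m : FreeMagma (Fin n)) (k1 k2 : ℕ) (h : d < k1 + degM m) :
    monProd F d k1 k2 m = 0 := by
  induction m using FreeMagma.recOnMul generalizing k1 k2 with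
  | ih1 i =>
    rw [monProd_def]
    simp only [leafData_of, enum_singleton, List.map_cons, List.map_nil,
      List.prod_cons, List.prod_nil, mul_one]
    simp only [mpFac]
    rw [dif_neg]
    simp only [not_and]
    intro h'
    simp only [degM_of] at h
    omega
  | ih2 x y ihx ihy =>
    rw [monProd_mul, ihy (k1 + degM x) (k2 + 1) (by simp only [degM_mul] at h; omega), mul_zero]

lemma aprod_apply {R : Type*} [CommRing R] (u v : Arr d R) (a b : Fin (d + 1)) (k : Fin d) :
    (u * v) a b k = if h : (k : ℕ) + 1 < d then
      ∑ l : Fin (d + 1), u a l ⟨(k : ℕ) + 1, h⟩ * v l b ⟨(k : ℕ) + 1, h⟩ else 0 := rfl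

lemma Z_apply (i : Fin n) (a b : Fin (d + 1)) (k : Fin d) :
    Z F n d i a b k = if h : (a : ℕ) < d ∧ (b : ℕ) = (a : ℕ) + 1 then
      MvPolynomial.X (i, ⟨(a : ℕ), h.1⟩, k) else 0 := rfl

lemma evalZ (m : FreeMagma (Fin n)) (a b : Fin (d + 1)) (k : Fin d) :
    evalWith (· * ·) (Z F n d) m a b k
      = if (b : ℕ) = (a : ℕ) + degM m then monProd F d (a : ℕ) (k : ℕ) m else 0 := by
  induction m using FreeMagma.recOnMul generalizing a b k with
  | ih1 i =>
    rw [evalWith_of, Z_apply]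
    have hmp : monProd F d (a : ℕ) (k : ℕ) (FreeMagma.of i)
        = if h : (a : ℕ) < d then MvPolynomial.X (i, ⟨(a : ℕ), h⟩, k) else 0 := by
      rw [monProd_def]
      simp only [leafData_of, enum_singleton, List.map_cons, List.map_nil,
        List.prod_cons, List.prod_nil, mul_one]
      simp only [mpFac]
      by_cases ha : (a : ℕ) < d
      · rw [dif_pos ⟨by omega, by simpa using k.isLt⟩, dif_pos ha]
        congr 1
        refine Prod.ext rfl (Prod.ext ?_ ?_) <;> simp [Fin.ext_iff]
      · rw [dif_neg (by omega), dif_neg ha]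
    by_cases hb : (b : ℕ) = (a : ℕ) + 1
    · have ha : (a : ℕ) < d := by have := b.isLt; omega
      rw [if_pos (by simpa using hb), hmp, dif_pos ⟨ha, hb⟩, dif_pos ha]
    · rw [if_neg (by simpa using hb), dif_neg (by tauto)]
  | ih2 x y ihx ihy =>
    rw [evalWith_mul', aprod_apply]
    by_cases hk : (k : ℕ) + 1 < d
    · rw [dif_pos hk]
      have hsum : (∑ l : Fin (d + 1),
            evalWith (· * ·) (Z F n d) x a l ⟨(k : ℕ) + 1, hk⟩
              * evalWith (· * ·) (Z F n d) y l b ⟨(k : ℕ) + 1, hk⟩)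
          = ∑ l : Fin (d + 1),
            (if (l : ℕ) = (a : ℕ) + degM x then monProd F d (a : ℕ) ((k : ℕ) + 1) x else 0)
              * (if (b : ℕ) = (l : ℕ) + degM y then
                  monProd F d (l : ℕ) ((k : ℕ) + 1) y else 0) := by
        refine Finset.sum_congr rfl fun l _ => ?_
        rw [ihx, ihy]
      rw [hsum]
      by_cases hax : (a : ℕ) + degM x ≤ d
      · set l₀ : Fin (d + 1) := ⟨(a : ℕ) + degM x, by omega⟩ with hl₀
        rw [Finset.sum_eq_single l₀]
        · rw [if_pos (by simp [hl₀])]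
          by_cases hb : (b : ℕ) = (a : ℕ) + degM (x * y)
          · rw [if_pos hb, if_pos (by simp only [degM_mul] at hb; simp [hl₀]; omega),
              monProd_mul]
          · rw [if_neg hb, if_neg (by simp only [degM_mul] at hb; simp [hl₀]; omega), mul_zero]
        · intro l _ hll
          rw [if_neg, zero_mul]
          intro hc
          exact hll (Fin.ext (by simp [hl₀, hc]))
        · intro h; exact absurd (Finset.mem_univ l₀) h
      · have hz : ∀ l : Fin (d + 1), ¬ ((l : ℕ) = (a : ℕ) + degM x) := by
          intro l hc; have := l.isLt; omega
        rw [Finset.sum_eq_zero (fun l _ => by rw [if_neg (hz l), zero_mul])]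
        by_cases hb : (b : ℕ) = (a : ℕ) + degM (x * y)
        · rw [if_pos hb, monProd_mul, monProd_wide x _ _ (by omega), zero_mul]
        · rw [if_neg hb]
    · rw [dif_neg hk]
      by_cases hb : (b : ℕ) = (a : ℕ) + degM (x * y)
      · rw [if_pos hb, monProd_mul, monProd_deep x _ _ (by omega), zero_mul]
      · rw [if_neg hb]

end MonProd

section Monomial
variable {F : Type*} [CommRing F] {n d : ℕ}

/-- A total version of the variable key of an enumerated leaf. -/
def mkey (n : ℕ) {d : ℕ} (hd : 0 < d) (q : ℕ × (Fin n × ℕ)) : Fin n × Fin d × Fin d :=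
  (q.2.1, ⟨q.1 % d, Nat.mod_lt _ hd⟩, ⟨(q.2.2 - 1) % d, Nat.mod_lt _ hd⟩)

/-- The exponent of the monomial `monProd F d 0 0 m`. -/
def expf (n : ℕ) {d : ℕ} (hd : 0 < d) (m : FreeMagma (Fin n)) : (Fin n × Fin d × Fin d) →₀ ℕ :=
  ((enumFrom' 0 (leafData m 1)).map (fun q => Finsupp.single (mkey n hd q) 1)).sum

lemma listprod_X (hd : 0 < d) (L : List (ℕ × (Fin n × ℕ)))
    (hL : ∀ q ∈ L, q.1 < d ∧ q.2.2 - 1 < d) :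
    ((L.map (mpFac F d 0 0)).prod : MvPolynomial (Fin n × Fin d × Fin d) F)
      = MvPolynomial.monomial ((L.map (fun q => Finsupp.single (mkey n hd q) 1)).sum) 1 := by
  induction L with
  | nil => simp
  | cons q l ih =>
    obtain ⟨h1, h2⟩ := hL q List.mem_cons_self
    simp only [List.map_cons, List.prod_cons, List.sum_cons]
    rw [ih (fun p hp => hL p (List.mem_cons_of_mem _ hp))]
    have hfac : mpFac F d 0 0 q = MvPolynomial.X (mkey n hd q) := by
      simp only [mpFac, mkey]
      rw [dif_pos ⟨by omega, by omega⟩]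
      congr 1
      refine Prod.ext rfl (Prod.ext ?_ ?_) <;>
        simp [Fin.ext_iff, Nat.mod_eq_of_lt h1, Nat.mod_eq_of_lt h2]
    have hX : (MvPolynomial.X (mkey n hd q) : MvPolynomial (Fin n × Fin d × Fin d) F)
        = MvPolynomial.monomial (Finsupp.single (mkey n hd q) 1) 1 := rfl
    rw [hfac, hX, MvPolynomial.monomial_mul, one_mul]

lemma enum_cond (m : FreeMagma (Fin n)) (hm : degM m ≤ d) :
    ∀ q ∈ enumFrom' 0 (leafData m 1), q.1 < d ∧ q.2.2 - 1 < d := by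
  intro q hq
  have h1 : q.1 < 0 + (leafData m 1).length := (mem_enumFrom' hq).2.1
  rw [leafData_length] at h1
  have h2 := leafData_level m 1 q.2 (mem_enumFrom' hq).2.2
  have h3 := depthM_le_degM m
  omega

lemma monProd_eq_monomial (hd : 0 < d) (m : FreeMagma (Fin n)) (hm : degM m ≤ d) :
    monProd F d 0 0 m = MvPolynomial.monomial (expf n hd m) 1 := by
  rw [monProd_def, expf, listprod_X hd _ (enum_cond m hm)]

lemma sum_single_apply {τ : Type*} [DecidableEq τ] (L : List τ) (v : τ) :
    (((L.map (fun u => Finsupp.single u (1 : ℕ))).sum)) v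
      = Multiset.count v (↑L : Multiset τ) := by
  induction L with
  | nil => simp
  | cons a l ih =>
    have hc : (↑(a :: l) : Multiset τ) = a ::ₘ (↑l : Multiset τ) := rfl
    simp only [List.map_cons, List.sum_cons, Finsupp.add_apply, ih, hc,
      Multiset.count_cons, Finsupp.single_apply]
    by_cases hav : a = v
    · subst hav; simp only [if_pos rfl]; omega
    · rw [if_neg hav, if_neg (fun hh => hav hh.symm)]; omega

lemma pairwise_enumFrom {α : Type*} (L : List α) :
    ∀ t0 : ℕ, (enumFrom' t0 L).Pairwise (fun p q => p.1 < q.1) := by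
  induction L with
  | nil => intro t0; simp
  | cons a l ih =>
    intro t0
    rw [enumFrom'_cons, List.pairwise_cons]
    exact ⟨fun q hq => by have := (mem_enumFrom' hq).1; omega, ih (t0 + 1)⟩

lemma expf_inj (hd : 0 < d) {m m' : FreeMagma (Fin n)} (hm : degM m ≤ d) (hm' : degM m' ≤ d)
    (h : expf n hd m = expf n hd m') : m = m' := by
  set P := (enumFrom' 0 (leafData m 1)).map (mkey n hd) with hP
  set Q := (enumFrom' 0 (leafData m' 1)).map (mkey n hd) with hQ
  have hcnt : ∀ v, Multiset.count v (↑P : Multiset (Fin n × Fin d × Fin d))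
      = Multiset.count v (↑Q : Multiset (Fin n × Fin d × Fin d)) := by
    intro v
    rw [← sum_single_apply P v, ← sum_single_apply Q v, hP, hQ, List.map_map, List.map_map]
    have := congrFun (congrArg (fun g : (Fin n × Fin d × Fin d) →₀ ℕ => ⇑g) h) v
    simpa [expf, Function.comp_def] using this
  have hperm : P.Perm Q := Multiset.coe_eq_coe.mp (Multiset.ext.mpr hcnt)
  have hpw : ∀ (mm : FreeMagma (Fin n)), degM mm ≤ d →
      ((enumFrom' 0 (leafData mm 1)).map (mkey n hd)).Pairwise
        (fun u v : Fin n × Fin d × Fin d => (u.2.1 : ℕ) < (v.2.1 : ℕ)) := by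
    intro mm hmm
    rw [List.pairwise_map]
    have hpw0 := pairwise_enumFrom (leafData mm 1) 0
    refine List.Pairwise.imp_of_mem ?_ hpw0
    intro p q hp hq hlt
    have hp1 := (enum_cond mm hmm p hp).1
    have hq1 := (enum_cond mm hmm q hq).1
    simp only [mkey]
    rw [Nat.mod_eq_of_lt hp1, Nat.mod_eq_of_lt hq1]
    exact hlt
  haveI : Std.Antisymm
      (fun u v : Fin n × Fin d × Fin d => (u.2.1 : ℕ) < (v.2.1 : ℕ)) :=
    ⟨fun a b h1 h2 => absurd h2 (by omega)⟩
  have hPQ : P = Q := hperm.eq_of_pairwise' (hpw m hm) (hpw m' hm')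
  have hlen : (leafData m 1).length = (leafData m' 1).length := by
    have := hperm.length_eq
    simpa [hP, hQ] using this
  apply leafData_inj (s := 1)
  apply List.ext_getElem hlen
  intro t ht1 ht2
  have hPt : ∀ (mm : FreeMagma (Fin n)) (htm : t < (leafData mm 1).length),
      ((enumFrom' 0 (leafData mm 1)).map (mkey n hd))[t]'(by simpa using htm)
        = mkey n hd (t, (leafData mm 1)[t]'htm) := by
    intro mm htm
    rw [List.getElem_map]
    congr 1
    have := getElem_enumFrom' (leafData mm 1) 0 t
      (by simpa using htm)
    rw [this]
    simp
  have hget : mkey n hd (t, (leafData m 1)[t]'ht1) = mkey n hd (t, (leafData m' 1)[t]'ht2) := by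
    rw [← hPt m ht1, ← hPt m' ht2]
    simp only [hP, hQ] at hPQ
    exact List.getElem_of_eq hPQ _
  -- extract components
  have hlev : ∀ (mm : FreeMagma (Fin n)) (hmm : degM mm ≤ d) (htm : t < (leafData mm 1).length),
      1 ≤ ((leafData mm 1)[t]'htm).2 ∧ ((leafData mm 1)[t]'htm).2 - 1 < d := by
    intro mm hmm htm
    have hmem : (leafData mm 1)[t]'htm ∈ leafData mm 1 := List.getElem_mem _
    have h2 := leafData_level mm 1 _ hmem
    have h3 := depthM_le_degM mm
    omega
  obtain ⟨ha1, ha2⟩ := hlev m hm ht1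
  obtain ⟨hb1, hb2⟩ := hlev m' hm' ht2
  simp only [mkey, Prod.mk.injEq, Fin.mk.injEq] at hget
  rw [Nat.mod_eq_of_lt ha2, Nat.mod_eq_of_lt hb2] at hget
  refine Prod.ext hget.1 ?_
  have := hget.2.2
  omega

end Monomial

section Eval
variable {F : Type*} [Field F] {n d : ℕ}
variable {R R' : Type*} [CommRing R] [CommRing R'] [Algebra F R] [Algebra F R']

/-- Entrywise application of an algebra map to an array. -/
def mapArr (φ : R →ₐ[F] R') (x : Arr d R) : Arr d R' := fun a b k => φ (x a b k)

lemma mapArr_zero (φ : R →ₐ[F] R') : mapArr (d := d) φ 0 = 0 := by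
  funext a b k
  exact map_zero φ

lemma mapArr_add (φ : R →ₐ[F] R') (x y : Arr d R) :
    mapArr φ (x + y) = mapArr φ x + mapArr φ y := by
  funext a b k
  exact map_add φ _ _

lemma mapArr_smulF (φ : R →ₐ[F] R') (c : F) (x : Arr d R) :
    mapArr φ (c • x) = c • mapArr φ x := by
  funext a b k
  exact map_smul φ c _

lemma mapArr_smulR (φ : R →ₐ[F] R') (r : R) (x : Arr d R) :
    mapArr φ (r • x) = φ r • mapArr φ x := by
  funext a b k
  show φ (r * x a b k) = φ r * φ (x a b k)
  exact map_mul φ _ _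

lemma mapArr_mul (φ : R →ₐ[F] R') (x y : Arr d R) :
    mapArr φ (x * y) = mapArr φ x * mapArr φ y := by
  funext a b k
  show φ ((x * y) a b k) = (mapArr φ x * mapArr φ y) a b k
  rw [aprod_apply, aprod_apply, apply_dite φ]
  congr 1
  · funext h
    rw [map_sum]
    refine Finset.sum_congr rfl fun l _ => map_mul φ _ _
  · funext h
    exact map_zero φ

/-- Componentwise application of an algebra map to the unitization. -/
def mapU (φ : R →ₐ[F] R') (x : Unitization R (Arr d R)) : Unitization R' (Arr d R') :=
  Unitization.inl (φ x.fst) + Unitization.inr (mapArr φ x.snd)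

@[simp] lemma fst_mapU (φ : R →ₐ[F] R') (x : Unitization R (Arr d R)) :
    (mapU φ x).fst = φ x.fst := by simp [mapU]

@[simp] lemma snd_mapU (φ : R →ₐ[F] R') (x : Unitization R (Arr d R)) :
    (mapU φ x).snd = mapArr φ x.snd := by simp [mapU]

lemma mapU_add (φ : R →ₐ[F] R') (x y : Unitization R (Arr d R)) :
    mapU φ (x + y) = mapU φ x + mapU φ y := by
  apply Unitization.ext
  · simp
  · simp [mapArr_add]

lemma mapU_smul (φ : R →ₐ[F] R') (c : F) (x : Unitization R (Arr d R)) :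
    mapU φ (c • x) = c • mapU φ x := by
  apply Unitization.ext
  · simp [Unitization.fst_smul]
  · simp [Unitization.snd_smul, mapArr_smulF]

lemma mapU_mul (φ : R →ₐ[F] R') (x y : Unitization R (Arr d R)) :
    mapU φ (x * y) = mapU φ x * mapU φ y := by
  apply Unitization.ext
  · simp [Unitization.fst_mul]
  · simp only [snd_mapU, Unitization.snd_mul, Unitization.fst_mul, fst_mapU,
      mapArr_add, mapArr_smulR, mapArr_mul]

lemma mapU_evalWith (φ : R →ₐ[F] R') (b : Fin n → Unitization R (Arr d R))
    (m : FreeMagma (Fin n)) :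
    mapU φ (evalWith (· * ·) b m) = evalWith (· * ·) (fun i => mapU φ (b i)) m := by
  induction m using FreeMagma.recOnMul with
  | ih1 i => rfl
  | ih2 x y ihx ihy => rw [evalWith_mul', evalWith_mul', mapU_mul, ihx, ihy]

/-- `F`-linear evaluation of an element of the unitization of the free algebra in the
unitization of `Arr d R`. -/
def EvalU (b : Fin n → Unitization R (Arr d R))
    (f : Unitization F (FreeNonUnitalNonAssocAlgebra F (Fin n))) : Unitization R (Arr d R) :=
  Unitization.inl (algebraMap F R f.fst)
    + Finsupp.sum (coeffOf f.snd) fun m c => c • evalWith (· * ·) b m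

lemma EvalU_self (b : Fin n → Unitization F (Arr d F))
    (f : Unitization F (FreeNonUnitalNonAssocAlgebra F (Fin n))) :
    EvalU b f = evalUnit b f := by
  rw [EvalU, evalUnit, evalNA, evalNAWith]
  have h : algebraMap F F f.fst = f.fst := by simp
  rw [h]

lemma mapU_finsuppSum (φ : R →ₐ[F] R') (g : FreeMagma (Fin n) →₀ F)
    (h : FreeMagma (Fin n) → F → Unitization R (Arr d R)) :
    mapU φ (Finsupp.sum g h) = Finsupp.sum g fun m c => mapU φ (h m c) := by
  rw [Finsupp.sum, Finsupp.sum]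
  exact map_sum (AddMonoidHom.mk' (mapU φ) (mapU_add φ)) _ _

lemma mapU_EvalU (φ : R →ₐ[F] R') (b : Fin n → Unitization R (Arr d R))
    (f : Unitization F (FreeNonUnitalNonAssocAlgebra F (Fin n))) :
    mapU φ (EvalU b f) = EvalU (fun i => mapU φ (b i)) f := by
  rw [EvalU, EvalU, mapU_add, mapU_finsuppSum]
  congr 1
  · apply Unitization.ext
    · simp [φ.commutes]
    · simp [mapArr_zero]
  · refine Finsupp.sum_congr fun m _ => ?_
    rw [mapU_smul, mapU_evalWith]

lemma fst_finsuppSum (g : FreeMagma (Fin n) →₀ F)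
    (h : FreeMagma (Fin n) → F → Unitization R (Arr d R)) :
    (Finsupp.sum g h).fst = Finsupp.sum g fun m c => (h m c).fst := by
  rw [Finsupp.sum, Finsupp.sum]
  exact map_sum (AddMonoidHom.mk' (fun x : Unitization R (Arr d R) => x.fst)
    (fun x y => Unitization.fst_add x y)) _ _

lemma snd_finsuppSum (g : FreeMagma (Fin n) →₀ F)
    (h : FreeMagma (Fin n) → F → Unitization R (Arr d R)) :
    (Finsupp.sum g h).snd = Finsupp.sum g fun m c => (h m c).snd := by
  rw [Finsupp.sum, Finsupp.sum]
  exact map_sum (AddMonoidHom.mk' (fun x : Unitization R (Arr d R) => x.snd)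
    (fun x y => Unitization.snd_add x y)) _ _

lemma arr_sum_apply {ι : Type*} (s : Finset ι) (g : ι → Arr d R)
    (a b : Fin (d + 1)) (k : Fin d) :
    (∑ i ∈ s, g i) a b k = ∑ i ∈ s, g i a b k :=
  map_sum (AddMonoidHom.mk' (fun x : Arr d R => x a b k) (fun x y => rfl)) _ _

lemma arr_finsuppSum_apply (g : FreeMagma (Fin n) →₀ F)
    (h : FreeMagma (Fin n) → F → Arr d R) (a b : Fin (d + 1)) (k : Fin d) :
    (Finsupp.sum g h) a b k = Finsupp.sum g fun m c => h m c a b k := by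
  rw [Finsupp.sum, Finsupp.sum, arr_sum_apply]

lemma evalWith_inr (z : Fin n → Arr d R) (m : FreeMagma (Fin n)) :
    evalWith (· * ·) (fun i => (Unitization.inr (z i) : Unitization R (Arr d R))) m
      = Unitization.inr (evalWith (· * ·) z m) := by
  induction m using FreeMagma.recOnMul with
  | ih1 i => rfl
  | ih2 x y ihx ihy =>
    rw [evalWith_mul', evalWith_mul', ihx, ihy]
    exact (Unitization.inr_mul R _ _).symm

end Eval

section Generic
variable {F : Type*} [Field F] {n d : ℕ}

/-- The index type of the coordinates of `A_d`: `none` is the scalar coordinate. -/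
abbrev Vix (n d : ℕ) := Fin n × Option (Fin (d + 1) × Fin (d + 1) × Fin d)

/-- The generic tuple of elements of the unitization of `A'_d` over the polynomial ring. -/
def genB (F : Type*) [Field F] (n d : ℕ) (i : Fin n) :
    Unitization (MvPolynomial (Vix n d) F) (Arr d (MvPolynomial (Vix n d) F)) :=
  Unitization.inl (MvPolynomial.X (i, none))
    + Unitization.inr (A := Arr d (MvPolynomial (Vix n d) F))
      (fun a b k => MvPolynomial.X (i, some (a, b, k)))

@[simp] lemma genB_fst (i : Fin n) :
    (genB F n d i).fst = MvPolynomial.X (i, none) := by simp [genB]; rfl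

@[simp] lemma genB_snd (i : Fin n) :
    (genB F n d i).snd = fun a b k => MvPolynomial.X (i, some (a, b, k)) := by simp [genB]; rfl

/-- The coordinates of the evaluation of `f` at the generic tuple. -/
def Pcoord (f : Unitization F (FreeNonUnitalNonAssocAlgebra F (Fin n)))
    (u : Option (Fin (d + 1) × Fin (d + 1) × Fin d)) : MvPolynomial (Vix n d) F :=
  Option.elim u (EvalU (genB F n d) f).fst
    (fun abk => (EvalU (genB F n d) f).snd abk.1 abk.2.1 abk.2.2)

/-- The tuple of elements of `A_d` determined by a coordinate vector. -/
def bOf (v : Vix n d → F) (i : Fin n) : Unitization F (Arr d F) :=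
  Unitization.inl (v (i, none)) + Unitization.inr (A := Arr d F) (fun a b k => v (i, some (a, b, k)))

@[simp] lemma bOf_fst (v : Vix n d → F) (i : Fin n) : (bOf v i).fst = v (i, none) := by
  simp [bOf]; rfl

@[simp] lemma bOf_snd (v : Vix n d → F) (i : Fin n) :
    (bOf v i).snd = fun a b k => v (i, some (a, b, k)) := by simp [bOf]; rfl

lemma mapU_genB (v : Vix n d → F) (i : Fin n) :
    mapU (MvPolynomial.aeval v) (genB F n d i) = bOf v i := by
  apply Unitization.ext
  · simp
  · rw [snd_mapU]
    funext a b k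
    show MvPolynomial.aeval v ((genB F n d i).snd a b k) = (bOf v i).snd a b k
    simp [genB_snd, bOf_snd]

lemma eval_Pcoord (v : Vix n d → F)
    (f : Unitization F (FreeNonUnitalNonAssocAlgebra F (Fin n)))
    (u : Option (Fin (d + 1) × Fin (d + 1) × Fin d)) :
    MvPolynomial.aeval v (Pcoord f u)
      = Option.elim u (evalUnit (bOf v) f).fst
          (fun abk => (evalUnit (bOf v) f).snd abk.1 abk.2.1 abk.2.2) := by
  have h : mapU (MvPolynomial.aeval v) (EvalU (genB F n d) f) = EvalU (bOf v) f := by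
    rw [mapU_EvalU]
    congr 1
    funext i
    exact mapU_genB v i
  cases u with
  | none =>
    have := congrArg Prod.fst (congrArg Unitization.toProd h)
    rw [fst_mapU] at this
    rw [Pcoord, Option.elim, ← EvalU_self]
    exact this
  | some abk =>
    have := congrArg Prod.snd (congrArg Unitization.toProd h)
    rw [snd_mapU] at this
    have h2 := congrFun (congrFun (congrFun this abk.1) abk.2.1) abk.2.2
    rw [Pcoord, Option.elim, ← EvalU_self]
    exact h2

/-- The substitution sending the generic tuple to the tuple of `Z`'s. -/
def Zass (F : Type*) [Field F] (n d : ℕ) :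
    Vix n d → MvPolynomial (Fin n × Fin d × Fin d) F :=
  fun q => Option.elim q.2 0 (fun abk => Z F n d q.1 abk.1 abk.2.1 abk.2.2)

lemma mapU_genB_Z (i : Fin n) :
    mapU (MvPolynomial.aeval (Zass F n d)) (genB F n d i) = Unitization.inr (Z F n d i) := by
  apply Unitization.ext
  · simp [Zass]
  · rw [snd_mapU]
    funext a b k
    show MvPolynomial.aeval (Zass F n d) ((genB F n d i).snd a b k)
      = (Unitization.inr (Z F n d i) : Unitization (MvPolynomial (Fin n × Fin d × Fin d) F)
          (Arr d (MvPolynomial (Fin n × Fin d × Fin d) F))).snd a b k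
    simp [genB_snd, Zass]

lemma theta_Pcoord (f : Unitization F (FreeNonUnitalNonAssocAlgebra F (Fin n)))
    (a b : Fin (d + 1)) (k : Fin d) :
    MvPolynomial.aeval (Zass F n d) (Pcoord f (some (a, b, k)))
      = Finsupp.sum (coeffOf f.snd) (fun m c =>
          c • (if (b : ℕ) = (a : ℕ) + degM m then monProd F d (a : ℕ) (k : ℕ) m else 0)) := by
  have h : mapU (MvPolynomial.aeval (Zass F n d)) (EvalU (genB F n d) f)
      = EvalU (fun i => (Unitization.inr (Z F n d i) :
          Unitization (MvPolynomial (Fin n × Fin d × Fin d) F) _)) f := by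
    rw [mapU_EvalU]
    congr 1
    funext i
    exact mapU_genB_Z i
  have hsnd := congrArg Prod.snd (congrArg Unitization.toProd h)
  rw [snd_mapU] at hsnd
  have h2 := congrFun (congrFun (congrFun hsnd a) b) k
  rw [Pcoord, Option.elim]
  rw [show (mapArr (MvPolynomial.aeval (Zass F n d)) (EvalU (genB F n d) f).snd) a b k
    = MvPolynomial.aeval (Zass F n d) ((EvalU (genB F n d) f).snd a b k) from rfl] at h2
  rw [h2, EvalU, Unitization.snd_add, Unitization.snd_inl, zero_add, snd_finsuppSum,
    arr_finsuppSum_apply]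
  refine Finsupp.sum_congr fun m _ => ?_
  rw [show ((coeffOf f.snd m • evalWith (· * ·)
      (fun i => (Unitization.inr (Z F n d i) : Unitization (MvPolynomial (Fin n × Fin d × Fin d) F) _)) m).snd) a b k
    = coeffOf f.snd m • ((evalWith (· * ·)
      (fun i => (Unitization.inr (Z F n d i) : Unitization (MvPolynomial (Fin n × Fin d × Fin d) F) _)) m).snd a b k) from by
      rw [Unitization.snd_smul]; rfl]
  rw [evalWith_inr, Unitization.snd_inr, evalZ]

end Generic

section DegNonzero
variable {F : Type*} [Field F] {n d : ℕ}

lemma totalDegree_evalWith_genB (m : FreeMagma (Fin n)) :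
    ((evalWith (· * ·) (genB F n d) m).fst.totalDegree ≤ degM m)
      ∧ ∀ (a b : Fin (d + 1)) (k : Fin d),
        (((evalWith (· * ·) (genB F n d) m).snd a b k).totalDegree ≤ degM m) := by
  induction m using FreeMagma.recOnMul with
  | ih1 i =>
    constructor
    · rw [evalWith_of, genB_fst]
      simp [MvPolynomial.totalDegree_X]
    · intro a b k
      rw [evalWith_of, genB_snd]
      simp [MvPolynomial.totalDegree_X]
  | ih2 x y ihx ihy =>
    set ex := evalWith (· * ·) (genB F n d) x with hex
    set ey := evalWith (· * ·) (genB F n d) y with hey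
    constructor
    · rw [evalWith_mul', Unitization.fst_mul]
      refine le_trans (MvPolynomial.totalDegree_mul _ _) ?_
      rw [degM_mul]
      exact add_le_add ihx.1 ihy.1
    · intro a b k
      rw [evalWith_mul', Unitization.snd_mul]
      have heq : ((ex.fst • ey.snd + ey.fst • ex.snd + ex.snd * ey.snd) a b k)
          = ex.fst * ey.snd a b k + ey.fst * ex.snd a b k + (ex.snd * ey.snd) a b k := rfl
      rw [heq, degM_mul]
      refine le_trans (MvPolynomial.totalDegree_add _ _) (max_le
        (le_trans (MvPolynomial.totalDegree_add _ _) (max_le ?_ ?_)) ?_)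
      · exact le_trans (MvPolynomial.totalDegree_mul _ _)
          (add_le_add ihx.1 (ihy.2 a b k))
      · exact le_trans (MvPolynomial.totalDegree_mul _ _)
          (le_trans (add_le_add ihy.1 (ihx.2 a b k)) (by omega))
      · rw [aprod_apply]
        by_cases hk2 : (k : ℕ) + 1 < d
        · rw [dif_pos hk2]
          refine le_trans (MvPolynomial.totalDegree_finset_sum _ _) (Finset.sup_le fun l _ => ?_)
          exact le_trans (MvPolynomial.totalDegree_mul _ _)
            (add_le_add (ihx.2 _ _ _) (ihy.2 _ _ _))
        · rw [dif_neg hk2]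
          simp

lemma totalDegree_Pcoord (f : Unitization F (FreeNonUnitalNonAssocAlgebra F (Fin n)))
    (hdeg : ∀ m ∈ (coeffOf f.snd).support, degM m ≤ d)
    (u : Option (Fin (d + 1) × Fin (d + 1) × Fin d)) :
    (Pcoord f u).totalDegree ≤ d := by
  cases u with
  | none =>
    rw [Pcoord, Option.elim, EvalU, Unitization.fst_add, Unitization.fst_inl, fst_finsuppSum]
    refine le_trans (MvPolynomial.totalDegree_add _ _) (max_le ?_ ?_)
    · rw [show (algebraMap F (MvPolynomial (Vix n d) F)) f.fst = MvPolynomial.C f.fst from rfl]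
      simp
    · rw [Finsupp.sum]
      refine le_trans (MvPolynomial.totalDegree_finset_sum _ _) (Finset.sup_le fun m hm => ?_)
      rw [Unitization.fst_smul]
      exact le_trans (MvPolynomial.totalDegree_smul_le _ _)
        (le_trans (totalDegree_evalWith_genB m).1 (hdeg m hm))
  | some abk =>
    rw [Pcoord, Option.elim, EvalU, Unitization.snd_add, Unitization.snd_inl, zero_add,
      snd_finsuppSum, arr_finsuppSum_apply, Finsupp.sum]
    refine le_trans (MvPolynomial.totalDegree_finset_sum _ _) (Finset.sup_le fun m hm => ?_)
    rw [show ((coeffOf f.snd m • evalWith (· * ·) (genB F n d) m).snd) abk.1 abk.2.1 abk.2.2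
      = coeffOf f.snd m • ((evalWith (· * ·) (genB F n d) m).snd abk.1 abk.2.1 abk.2.2) from rfl]
    exact le_trans (MvPolynomial.totalDegree_smul_le _ _)
      (le_trans ((totalDegree_evalWith_genB m).2 _ _ _) (hdeg m hm))

lemma constantCoeff_fst_evalWith (m : FreeMagma (Fin n)) :
    MvPolynomial.constantCoeff ((evalWith (· * ·) (genB F n d) m).fst) = 0 := by
  induction m using FreeMagma.recOnMul with
  | ih1 i => rw [evalWith_of, genB_fst]; simp
  | ih2 x y ihx ihy =>
    rw [evalWith_mul', Unitization.fst_mul, map_mul, ihx, zero_mul]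

lemma Pcoord_none_ne (f : Unitization F (FreeNonUnitalNonAssocAlgebra F (Fin n)))
    (hf : f.fst ≠ 0) : Pcoord f (n := n) (d := d) none ≠ 0 := by
  intro h0
  have hC := congrArg MvPolynomial.constantCoeff h0
  rw [Pcoord, Option.elim, EvalU, Unitization.fst_add, Unitization.fst_inl, fst_finsuppSum,
    map_add, map_finsuppSum, map_zero] at hC
  rw [show MvPolynomial.constantCoeff ((algebraMap F (MvPolynomial (Vix n d) F)) f.fst)
    = f.fst from by simp] at hC
  have hz : ((coeffOf f.snd).sum fun m c =>
      MvPolynomial.constantCoeff ((c • evalWith (· * ·) (genB F n d) m).fst)) = 0 := by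
    rw [Finsupp.sum]
    apply Finset.sum_eq_zero
    intro m _
    rw [Unitization.fst_smul, MvPolynomial.smul_eq_C_mul, map_mul,
      constantCoeff_fst_evalWith, mul_zero]
  rw [hz, add_zero] at hC
  exact hf hC

lemma Pcoord_some_ne (hd : 1 ≤ d) (f : Unitization F (FreeNonUnitalNonAssocAlgebra F (Fin n)))
    (hdeg : ∀ m ∈ (coeffOf f.snd).support, degM m ≤ d) (hf : f.snd ≠ 0) :
    ∃ abk : Fin (d + 1) × Fin (d + 1) × Fin d, Pcoord f (some abk) ≠ 0 := by
  have hd0 : 0 < d := hd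
  have hsupp : (coeffOf f.snd).support.Nonempty := by
    rw [Finsupp.support_nonempty_iff]
    exact fun h => hf (MonoidAlgebra.coeff_eq_zero.mp h)
  obtain ⟨m₀, hm₀, hmax⟩ := Finset.exists_mem_eq_sup _ hsupp degM
  have hd'le : degM m₀ ≤ d := hdeg m₀ hm₀
  have hd'pos : 1 ≤ degM m₀ := degM_pos m₀
  refine ⟨(⟨0, by omega⟩, ⟨degM m₀, by omega⟩, ⟨0, hd0⟩), ?_⟩
  intro h0
  have hth := congrArg (MvPolynomial.aeval (Zass F n d)) h0
  rw [theta_Pcoord, map_zero] at hth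
  have hc := congrArg (MvPolynomial.coeff (expf n hd0 m₀)) hth
  rw [MvPolynomial.coeff_zero, Finsupp.sum, MvPolynomial.coeff_sum] at hc
  rw [Finset.sum_eq_single m₀] at hc
  · rw [if_pos (by simp), MvPolynomial.coeff_smul] at hc
    rw [show monProd F d ((⟨0, by omega⟩ : Fin (d + 1)) : ℕ) ((⟨0, hd0⟩ : Fin d) : ℕ) m₀
      = monProd F d 0 0 m₀ from rfl, monProd_eq_monomial hd0 m₀ hd'le,
      MvPolynomial.coeff_monomial, if_pos rfl] at hc
    have : coeffOf f.snd m₀ ≠ 0 := Finsupp.mem_support_iff.mp hm₀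
    rw [smul_eq_mul, mul_one] at hc
    exact this hc
  · intro m hm hne
    by_cases hcond : ((⟨degM m₀, by omega⟩ : Fin (d + 1)) : ℕ)
        = ((⟨0, by omega⟩ : Fin (d + 1)) : ℕ) + degM m
    · rw [if_pos hcond, MvPolynomial.coeff_smul]
      have hdm : degM m = degM m₀ := by simpa using hcond.symm
      rw [show monProd F d ((⟨0, by omega⟩ : Fin (d + 1)) : ℕ) ((⟨0, hd0⟩ : Fin d) : ℕ) m
        = monProd F d 0 0 m from rfl, monProd_eq_monomial hd0 m (hdm ▸ hd'le),
        MvPolynomial.coeff_monomial, if_neg, smul_zero]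
      intro heq
      exact hne (expf_inj hd0 (hdm ▸ hd'le) hd'le heq)
    · rw [if_neg hcond, smul_zero, MvPolynomial.coeff_zero]
  · intro hni
    exact absurd hm₀ hni

end DegNonzero

section SZ
open MvPolynomial

lemma SZ_fin {F : Type*} [Field F] [DecidableEq F] (S : Finset F) :
    ∀ (k : ℕ) (p : MvPolynomial (Fin k) F), p ≠ 0 →
      ((Fintype.piFinset fun _ : Fin k => S).filter fun v => eval v p = 0).card * S.card
        ≤ p.totalDegree * S.card ^ k := by
  intro k
  induction k with
  | zero =>
    intro p hp
    obtain ⟨c, rfl⟩ := C_surjective (Fin 0) p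
    have hc : c ≠ 0 := fun h => hp (by simp [h])
    have : ((Fintype.piFinset fun _ : Fin 0 => S).filter fun v => eval v (C c) = 0) = ∅ := by
      apply Finset.filter_false_of_mem
      intro v _
      simp [hc]
    rw [this]
    simp
  | succ k IH =>
    intro p hp
    set q := finSuccEquiv F k p with hq
    have hq0 : q ≠ 0 := by
      intro h
      rw [hq] at h
      exact hp ((EmbeddingLike.map_eq_zero_iff).mp h)
    set t := q.natDegree with ht
    have hct : q.coeff t ≠ 0 := by
      simpa [ht] using Polynomial.leadingCoeff_ne_zero.mpr hq0
    have hdeg : (q.coeff t).totalDegree + t ≤ p.totalDegree :=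
      totalDegree_coeff_finSuccEquiv_add_le p t hct
    -- bijection with pairs
    set A := ((Fintype.piFinset fun _ : Fin (k+1) => S).filter fun v => eval v p = 0) with hA
    set B := ((S ×ˢ Fintype.piFinset fun _ : Fin k => S).filter
      fun yw : F × (Fin k → F) => eval (Fin.cons yw.1 yw.2) p = 0) with hB
    have hAB : A.card = B.card := by
      apply Finset.card_bij (fun v _ => (v 0, Fin.tail v))
      · intro v hv
        simp only [hA, Finset.mem_filter, Fintype.mem_piFinset] at hv
        simp only [hB, Finset.mem_filter, Finset.mem_product, Fintype.mem_piFinset]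
        refine ⟨⟨hv.1 0, fun i => hv.1 _⟩, ?_⟩
        rw [Fin.cons_self_tail]
        exact hv.2
      · intro v hv v' hv' h
        have h1 : v 0 = v' 0 := (Prod.mk.injEq _ _ _ _ ▸ h).1
        have h2 : Fin.tail v = Fin.tail v' := (Prod.mk.injEq _ _ _ _ ▸ h).2
        rw [← Fin.cons_self_tail v, ← Fin.cons_self_tail v', h1, h2]
      · intro yw hyw
        simp only [hB, Finset.mem_filter, Finset.mem_product, Fintype.mem_piFinset] at hyw
        refine ⟨Fin.cons yw.1 yw.2, ?_, ?_⟩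
        · simp only [hA, Finset.mem_filter, Fintype.mem_piFinset]
          refine ⟨fun i => ?_, hyw.2⟩
          rcases Fin.eq_zero_or_eq_succ i with rfl | ⟨j, rfl⟩
          · simpa using hyw.1.1
          · simpa using hyw.1.2 j
        · simp
    set B1 := S ×ˢ ((Fintype.piFinset fun _ : Fin k => S).filter
      fun w => eval w (q.coeff t) = 0) with hB1
    set B2 := ((S ×ˢ Fintype.piFinset fun _ : Fin k => S).filter
      fun yw : F × (Fin k → F) =>
        Polynomial.eval yw.1 (q.map (eval yw.2)) = 0 ∧ eval yw.2 (q.coeff t) ≠ 0) with hB2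
    have hsub : B ⊆ B1 ∪ B2 := by
      intro yw hyw
      simp only [hB, Finset.mem_filter, Finset.mem_product] at hyw
      by_cases hw : eval yw.2 (q.coeff t) = 0
      · apply Finset.mem_union_left
        simp only [hB1, Finset.mem_product, Finset.mem_filter]
        exact ⟨hyw.1.1, hyw.1.2, hw⟩
      · apply Finset.mem_union_right
        simp only [hB2, Finset.mem_filter]
        refine ⟨Finset.mem_product.mpr hyw.1, ?_, hw⟩
        rw [← eval_eq_eval_mv_eval']
        exact hyw.2
    have hB1card : B1.card = S.card * ((Fintype.piFinset fun _ : Fin k => S).filter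
        fun w => eval w (q.coeff t) = 0).card := Finset.card_product _ _
    have hB2card : B2.card ≤ t * S.card ^ k := by
      rw [Finset.card_eq_sum_card_fiberwise (f := fun yw : F × (Fin k → F) => yw.2)
        (t := Fintype.piFinset fun _ : Fin k => S)
        (fun yw hyw => by
          simp only [hB2, Finset.coe_filter, Set.mem_setOf_eq, Finset.mem_product] at hyw
          exact hyw.1.2)]
      calc ∑ w ∈ Fintype.piFinset fun _ : Fin k => S,
            (B2.filter fun yw => yw.2 = w).card
          ≤ ∑ w ∈ Fintype.piFinset fun _ : Fin k => S, t := by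
            apply Finset.sum_le_sum
            intro w _
            by_cases hw : eval w (q.coeff t) = 0
            · have : (B2.filter fun yw => yw.2 = w) = ∅ := by
                apply Finset.filter_false_of_mem
                intro yw hyw
                intro h2
                simp only [hB2, Finset.mem_filter] at hyw
                exact hyw.2.2 (h2 ▸ hw)
              simp [this]
            · have hP : q.map (eval w) ≠ 0 := by
                intro h
                apply hw
                rw [← Polynomial.coeff_map]
                simp [h]
              calc (B2.filter fun yw => yw.2 = w).card
                  ≤ (q.map (eval w)).roots.toFinset.card := by
                    apply Finset.card_le_card_of_injOn (fun yw => yw.1)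
                    · intro yw hyw
                      simp only [hB2, Finset.mem_coe, Finset.mem_filter] at hyw
                      rw [Finset.mem_coe, Multiset.mem_toFinset, Polynomial.mem_roots hP]
                      rw [Polynomial.IsRoot, ← hyw.2]
                      exact hyw.1.2.1
                    · intro a ha b hb hab
                      rw [Finset.mem_coe, Finset.mem_filter] at ha hb
                      exact Prod.ext hab (ha.2.trans hb.2.symm)
                  _ ≤ Multiset.card (q.map (eval w)).roots := Multiset.toFinset_card_le _
                  _ ≤ (q.map (eval w)).natDegree := Polynomial.card_roots' _
                  _ ≤ t := Polynomial.natDegree_map_le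
        _ = t * S.card ^ k := by
            rw [Finset.sum_const, smul_eq_mul, Fintype.card_piFinset]
            simp [mul_comm]
    have hWS : ((Fintype.piFinset fun _ : Fin k => S).filter
        fun w => eval w (q.coeff t) = 0).card * S.card ≤ (q.coeff t).totalDegree * S.card ^ k :=
      IH _ hct
    calc A.card * S.card = B.card * S.card := by rw [hAB]
      _ ≤ (B1.card + B2.card) * S.card := by
          apply Nat.mul_le_mul_right
          exact le_trans (Finset.card_le_card hsub) (Finset.card_union_le _ _)
      _ = B1.card * S.card + B2.card * S.card := by ring
      _ ≤ S.card * ((q.coeff t).totalDegree * S.card ^ k) + (t * S.card ^ k) * S.card := by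
          apply Nat.add_le_add
          · rw [hB1card, Nat.mul_assoc]
            exact Nat.mul_le_mul_left _ hWS
          · exact Nat.mul_le_mul_right _ hB2card
      _ = ((q.coeff t).totalDegree + t) * S.card ^ (k+1) := by ring
      _ ≤ p.totalDegree * S.card ^ (k+1) := Nat.mul_le_mul_right _ hdeg

lemma SZ_gen {F : Type*} [Field F] [DecidableEq F] {V : Type*} [Fintype V] [DecidableEq V] (S : Finset F)
    (p : MvPolynomial V F) (hp : p ≠ 0) :
    ((Fintype.piFinset fun _ : V => S).filter fun v => eval v p = 0).card * S.card
      ≤ p.totalDegree * S.card ^ Fintype.card V := by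
  classical
  set e := Fintype.equivFin V with he
  set p' := rename e p with hp'
  have hp'0 : p' ≠ 0 := fun h => hp ((rename_injective _ e.injective) (by simpa using h))
  have hcard : ((Fintype.piFinset fun _ : V => S).filter fun v => eval v p = 0).card
      = ((Fintype.piFinset fun _ : Fin (Fintype.card V) => S).filter
          fun w => eval w p' = 0).card := by
    apply Finset.card_bij (fun v _ => v ∘ e.symm)
    · intro v hv
      simp only [Finset.mem_filter, Fintype.mem_piFinset] at hv ⊢
      refine ⟨fun i => hv.1 _, ?_⟩
      have hvv : (v ∘ ⇑e.symm) ∘ ⇑e = v := by funext i; simp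
      rw [hp', eval_rename, hvv]
      exact hv.2
    · intro v hv v' hv' h
      funext i
      have := congrFun h (e i)
      simpa using this
    · intro w hw
      simp only [Finset.mem_filter, Fintype.mem_piFinset] at hw
      rw [hp', eval_rename] at hw
      refine ⟨w ∘ e, ?_, ?_⟩
      · simp only [Finset.mem_filter, Fintype.mem_piFinset]
        exact ⟨fun i => hw.1 _, hw.2⟩
      · funext i
        simp
  rw [hcard]
  calc _ ≤ p'.totalDegree * S.card ^ (Fintype.card V) := SZ_fin S _ p' hp'0
    _ ≤ p.totalDegree * S.card ^ (Fintype.card V) :=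
        Nat.mul_le_mul_right _ (totalDegree_rename_le _ _)

end SZ

/-- Theorem `NonAssociative-SZ`.  Let `F` be a field, `d, n ≥ 1`, and let
`S ⊆ F` be a finite set with `|S| > d`.  Set `N := d(d+1)² + 1`, the dimension of
`A_d = Unitization F (A'_d(F))` (the `d(d+1)²` entries of the `A'_d` component together with
the scalar coordinate).  Let `f` be a nonzero element of the unitization of `F_{Ā,C̄}[X]`
whose `F_{Ā,C̄}[X]`-component has degree `≤ d`.  Then the number of tuples
`(b_1, …, b_n) ∈ (A_d)^n` all of whose `nN` coordinates lie in `S` and for which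
`f(b_1, …, b_n) = 0` is at most `d · |S|^{nN − 1}`; equivalently, a uniformly random such
tuple is a zero of `f` with probability at most `d / |S|`. -/
theorem SZ_for_Ad {F : Type*} [Field F] (n d : ℕ) (hn : 1 ≤ n) (hd : 1 ≤ d)
    (S : Finset F) (hS : d < S.card)
    (f : Unitization F (FreeNonUnitalNonAssocAlgebra F (Fin n))) (hf : f ≠ 0)
    (hdeg : ∀ m ∈ (coeffOf f.snd).support, degM m ≤ d) :
    Nat.card {b : Fin n → Unitization F (Arr d F) //
        (∀ i : Fin n, (b i).fst ∈ S) ∧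
        (∀ (i : Fin n) (i1 i2 : Fin (d + 1)) (i3 : Fin d), (b i).snd i1 i2 i3 ∈ S) ∧
        evalUnit b f = 0}
      ≤ d * S.card ^ (n * (d * (d + 1) ^ 2 + 1) - 1) := by
  classical
  obtain ⟨u, hu0, hud⟩ : ∃ u : Option (Fin (d + 1) × Fin (d + 1) × Fin d),
      Pcoord f u ≠ 0 ∧ (Pcoord f u).totalDegree ≤ d := by
    by_cases hf1 : f.fst = 0
    · have hf2 : f.snd ≠ 0 := by
        intro h2
        exact hf (Unitization.ext (by simp [hf1]) (by simp [h2]))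
      obtain ⟨abk, h⟩ := Pcoord_some_ne hd f hdeg hf2
      exact ⟨some abk, h, totalDegree_Pcoord f hdeg _⟩
    · exact ⟨none, Pcoord_none_ne f hf1, totalDegree_Pcoord f hdeg none⟩
  set N := d * (d + 1) ^ 2 + 1 with hN
  set W := (Fintype.piFinset fun _ : Vix n d => S).filter
      (fun v => MvPolynomial.eval v (Pcoord f u) = 0) with hW
  set coords : (Fin n → Unitization F (Arr d F)) → (Vix n d → F) := fun b q =>
    Option.elim q.2 ((b q.1).fst) (fun abk => (b q.1).snd abk.1 abk.2.1 abk.2.2) with hcoords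
  have hbOf : ∀ b : Fin n → Unitization F (Arr d F), bOf (coords b) = b := by
    intro b
    funext i
    apply Unitization.ext
    · simp [bOf, hcoords]; rfl
    · funext a b' k
      simp [bOf, hcoords]; rfl
  have haeval : ∀ v : Vix n d → F, MvPolynomial.eval v (Pcoord f u)
      = MvPolynomial.aeval v (Pcoord f u) := by
    intro v
    rfl
  have hmem : ∀ (b : Fin n → Unitization F (Arr d F)),
      ((∀ i : Fin n, (b i).fst ∈ S) ∧
        (∀ (i : Fin n) (i1 i2 : Fin (d + 1)) (i3 : Fin d), (b i).snd i1 i2 i3 ∈ S) ∧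
        evalUnit b f = 0) → coords b ∈ W := by
    intro b hb
    rw [hW, Finset.mem_filter]
    constructor
    · rw [Fintype.mem_piFinset]
      rintro ⟨i, (_ | abk)⟩
      · exact hb.1 i
      · exact hb.2.1 i abk.1 abk.2.1 abk.2.2
    · rw [haeval, eval_Pcoord, hbOf, hb.2.2]
      cases u with
      | none => simp
      | some abk => rfl
  set T := {b : Fin n → Unitization F (Arr d F) //
      (∀ i : Fin n, (b i).fst ∈ S) ∧
      (∀ (i : Fin n) (i1 i2 : Fin (d + 1)) (i3 : Fin d), (b i).snd i1 i2 i3 ∈ S) ∧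
      evalUnit b f = 0} with hT
  have h1 : Nat.card T ≤ W.card := by
    have hinj : Function.Injective
        (fun (b : T) => (⟨coords b.1, hmem b.1 b.2⟩ : {x // x ∈ W})) := by
      intro b₁ b₂ h
      have : coords b₁.1 = coords b₂.1 := congrArg Subtype.val h
      apply Subtype.ext
      rw [← hbOf b₁.1, ← hbOf b₂.1, this]
    calc Nat.card T ≤ Nat.card {x // x ∈ W} := Nat.card_le_card_of_injective _ hinj
      _ = W.card := Nat.card_eq_finsetCard W
  have hcV : Fintype.card (Vix n d) = n * N := by
    rw [hN, Fintype.card_prod, Fintype.card_option, Fintype.card_prod, Fintype.card_prod,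
      Fintype.card_fin, Fintype.card_fin, Fintype.card_fin]
    ring
  have h2 : W.card * S.card ≤ d * S.card ^ (n * N) := by
    have hsz := SZ_gen S (Pcoord f u) hu0
    rw [hcV] at hsz
    refine le_trans hsz (Nat.mul_le_mul_right _ hud)
  have hS0 : 0 < S.card := lt_of_le_of_lt (Nat.zero_le d) hS
  have hN0 : 0 < N := Nat.succ_pos _
  have hnN : 1 ≤ n * N := Nat.mul_pos hn hN0
  have h3 : W.card ≤ d * S.card ^ (n * N - 1) := by
    apply Nat.le_of_mul_le_mul_right _ hS0
    calc W.card * S.card ≤ d * S.card ^ (n * N) := h2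
      _ = d * S.card ^ (n * N - 1) * S.card := by
          rw [mul_assoc, ← pow_succ]
          congr 2
          omega
  exact le_trans h1 h3


end NAPIT
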